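/- For every integer N ≥ 1 and every real q with 0 < q < 1/2, the following exact identity holds: ∑_{n=1}^{N−1} q(1−q)^{n−1} · R(n, q) + (1−q)^{N−1} · R(N, q) = N/(2q). -/

import Mathlib

/-- `R n p = (1/(2p²))·((1−p)^{−(n−1)} − (1−p))`, the exact expected run time of the
(1+1) EA with uniform bit flip probability `p` on the `n`-bit LeadingOnes function
(Böttcher–Doerr–Neumann, Sudholt, Ladret). -/
noncomputable def runtimeLO (n : ℕ) (p : ℝ) : ℝ :=
  (1 / (2 * p ^ 2)) * ((1 - p) ^ (-((n : ℤ) - 1)) - (1 - p))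

lemma runtimeLO_key (q : ℝ) (hq : 1 - q ≠ 0) (hq0 : q ≠ 0) (m : ℕ) :
    (1 - q) ^ m * runtimeLO (m + 1) q = (1 / (2 * q ^ 2)) * (1 - (1 - q) ^ (m + 1)) := by
  unfold runtimeLO
  have h : -(((m + 1 : ℕ) : ℤ) - 1) = -(m : ℤ) := by push_cast; ring
  rw [h, zpow_neg, zpow_natCast]
  have hpm : (1 - q) ^ m ≠ 0 := pow_ne_zero _ hq
  field_simp
  ring

/-- Exact identity from the computation after Theorem 3.11: the `TrunkGeo(N,q)`-average
of `R(n, q)` equals `N/(2q)`. -/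
theorem stmt9 (N : ℕ) (hN : 1 ≤ N) (q : ℝ) (hq0 : 0 < q) (hq1 : q < 1 / 2) :
    (∑ n ∈ Finset.Icc 1 (N - 1), q * (1 - q) ^ (n - 1) * runtimeLO n q) +
      (1 - q) ^ (N - 1) * runtimeLO N q = (N : ℝ) / (2 * q) := by
  have hq : (1 : ℝ) - q ≠ 0 := by linarith
  have hq0' : q ≠ 0 := ne_of_gt hq0
  induction N with
  | zero => omega
  | succ N ih =>
    rcases Nat.eq_zero_or_pos N with h0 | hpos
    · subst h0
      rw [show Finset.Icc 1 (0 + 1 - 1) = ∅ from rfl, Finset.sum_empty, zero_add]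
      simp only [runtimeLO, Nat.cast_one]
      norm_num
      field_simp
    · have ih' := ih hpos
      obtain ⟨m, rfl⟩ := Nat.exists_eq_add_of_le hpos
      have hsum : (Finset.Icc 1 (1 + m + 1 - 1)) = Finset.Icc 1 (m + 1) := by
        congr 1; omega
      rw [hsum]
      rw [Finset.sum_Icc_succ_top (by omega : 1 ≤ m + 1)]
      have hsum2 : (Finset.Icc 1 (1 + m - 1)) = Finset.Icc 1 m := by
        congr 1; omega
      rw [hsum2] at ih'
      have hNm : (1 + m : ℕ) = m + 1 := by omega
      rw [hNm] at ih'
      rw [show (m + 1) - 1 = m from rfl] at ih'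
      have hold : (∑ n ∈ Finset.Icc 1 m, q * (1 - q) ^ (n - 1) * runtimeLO n q)
          = ((m + 1 : ℕ) : ℝ) / (2 * q) - (1 - q) ^ m * runtimeLO (m + 1) q := by
        linarith [ih']
      rw [hold]
      rw [show (1 + m + 1 - 1 : ℕ) = m + 1 from by omega,
        show (m + 1 - 1 : ℕ) = m from rfl,
        show (1 + m + 1 : ℕ) = m + 1 + 1 from by omega]
      have k1 := runtimeLO_key q hq hq0' m
      have k2 := runtimeLO_key q hq hq0' (m + 1)
      push_cast
      linear_combination (q - 1) * k1 + k2 + (q⁻¹ / 2) * mul_inv_cancel₀ hq0'
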